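/- For the reversible PCA with transition probabilities p_β(x,y) = Π_{i∈Λ} f_{Θ_i x, β}(y_i), where f_{x,β}(s) = ½(1 + s·tanh[β(Σ_j k(j)x_j + h)]), the quantity -log p_β(x,y) - βV(x,y) equals Σ_{i∈Λ} log(1 + e^{-2β|Σ_j k(j-i)x_j + h|}), where V(x,y) = Σ over sites i with y_i(Σ_j k(j-i)x_j + h) < 0 of 2|Σ_j k(j-i)x_j + h|. -/

import Mathlib

open Finset

private lemma half_eq (s t : ℝ) (hs : s = 1 ∨ s = -1) :
    (1/2 : ℝ) * (1 + s * Real.tanh t) = Real.exp (s*t) / (Real.exp t + Real.exp (-t)) := by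
  have hden : Real.exp t + Real.exp (-t) ≠ 0 := by positivity
  rcases hs with rfl | rfl <;>
    simp only [Real.tanh_eq_sinh_div_cosh, Real.sinh_eq, Real.cosh_eq, one_mul, neg_mul] <;>
    field_simp <;> ring

private lemma key (β a s : ℝ) (hβ : 0 < β) (ha : a ≠ 0) (hs : s = 1 ∨ s = -1) :
    -Real.log ((1/2) * (1 + s * Real.tanh (β*a))) - (if s*a < 0 then β*(2*|a|) else 0)
      = Real.log (1 + Real.exp (-2*β*|a|)) := by
  set t := β * a with ht
  have habs : |t| = β * |a| := by rw [ht, abs_mul, abs_of_pos hβ]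
  have hden : (0:ℝ) < Real.exp t + Real.exp (-t) := by positivity
  have hsplit : Real.exp t + Real.exp (-t) = Real.exp |t| * (1 + Real.exp (-2*β*|a|)) := by
    have : -2*β*|a| = -(2*|t|) := by rw [habs]; ring
    rw [this]
    rcases abs_cases t with ⟨h1, _⟩ | ⟨h1, _⟩ <;> rw [h1, mul_add, mul_one, ← Real.exp_add] <;>
      ring_nf
  rw [half_eq s t hs, Real.log_div (Real.exp_ne_zero _) (ne_of_gt hden), Real.log_exp,
    hsplit, Real.log_mul (Real.exp_ne_zero _) (by positivity), Real.log_exp, habs]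
  have hst : s * t = β * (s * a) := by rw [ht]; ring
  by_cases hc : s * a < 0
  · have h1 : s * a = -|a| := by
      have : |s*a| = |a| := by rcases hs with rfl | rfl <;> simp
      linarith [abs_of_neg hc ▸ this]
    have hab : (0:ℝ) < |a| := abs_pos.mpr ha
    simp only [if_pos hc, hst, h1]
    rw [if_pos (by linarith : -|a| < (0:ℝ))]
    ring
  · have hne : s * a ≠ 0 := by rcases hs with rfl | rfl <;> simpa using ha
    have hpos : 0 < s * a := lt_of_le_of_ne (not_lt.mp hc) (Ne.symm hne)
    have h1 : s * a = |a| := by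
      have : |s*a| = |a| := by rcases hs with rfl | rfl <;> simp
      linarith [abs_of_pos hpos ▸ this]
    have hab : (0:ℝ) < |a| := abs_pos.mpr ha
    simp only [if_neg hc, hst, h1]
    rw [if_neg (by linarith : ¬ |a| < (0:ℝ))]
    ring

theorem stmt10 {Λ : Type*} [Fintype Λ] [AddCommGroup Λ]
    (k : Λ → ℝ) (h β : ℝ) (hβ : 0 < β)
    (hksymm : ∀ j, k j = k (-j))
    (x y : Λ → ℝ)
    (hx : ∀ i, x i = 1 ∨ x i = -1) (hy : ∀ i, y i = 1 ∨ y i = -1)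
    -- non-degeneracy of the local fields :
    (hnd : ∀ i : Λ, (∑ j, k (j - i) * x j) + h ≠ 0) :
    -Real.log (∏ i, (1/2) * (1 + y i * Real.tanh (β * ((∑ j, k (j - i) * x j) + h))))
        - β * ∑ i ∈ univ.filter (fun i => y i * ((∑ j, k (j - i) * x j) + h) < 0),
            2 * |(∑ j, k (j - i) * x j) + h|
      = ∑ i, Real.log (1 + Real.exp (-2 * β * |(∑ j, k (j - i) * x j) + h|)) := by
  set a : Λ → ℝ := fun i => (∑ j, k (j - i) * x j) + h with ha
  have hpos : ∀ i, (0:ℝ) < (1/2) * (1 + y i * Real.tanh (β * a i)) := by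
    intro i
    rw [half_eq _ _ (hy i)]
    positivity
  rw [Real.log_prod (s := univ) (fun i _ => ne_of_gt (hpos i)), Finset.sum_filter, Finset.mul_sum,
    ← Finset.sum_neg_distrib, ← Finset.sum_sub_distrib]
  refine Finset.sum_congr rfl fun i _ => ?_
  have := key β (a i) (y i) hβ (hnd i) (hy i)
  rw [mul_ite, mul_zero]
  convert this using 3 <;> ring
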